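/- For the two-bidder smoothed first-price auction with λ > 0, opponent strategy β_2(v) = s·v with s ∈ (0,1], uniform prior on [0,1], and b_1 ≤ s, the absolute interim utility error |ū_1(v_1,b_1) − ū_1^{SM(λ)}(v_1,b_1)| is bounded above by ((ln 2 + 1)/s)·λ for all v_1, b_1 ∈ [0,1]. -/

import Mathlib

open Real MeasureTheory

theorem interim_utility_error_linear_bound (lam s v1 b1 : ℝ)
    (hlam : 0 < lam) (hs : s ∈ Set.Ioc (0 : ℝ) 1)
    (hv1 : v1 ∈ Set.Icc (0 : ℝ) 1) (hb1 : b1 ∈ Set.Icc (0 : ℝ) 1) (hbs : b1 ≤ s) :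
    |(∫ v2 in Set.Icc (0 : ℝ) 1, (if s * v2 < b1 then v1 - b1 else 0)) -
      ∫ v2 in Set.Icc (0 : ℝ) 1,
        (v1 - ((if s * v2 < b1 then b1 else 0) + (if b1 < s * v2 then s * v2 else 0))) *
          (1 + Real.exp ((s * v2 - b1) / lam))⁻¹|
      ≤ (Real.log 2 + 1) / s * lam := by
  obtain ⟨hs0, hs1⟩ := hs
  obtain ⟨hv0, hv11⟩ := hv1
  obtain ⟨hb0, hb11⟩ := hb1
  set f : ℝ → ℝ := fun v2 => if s * v2 < b1 then v1 - b1 else 0 with hf_def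
  set g : ℝ → ℝ := fun v2 =>
    (v1 - ((if s * v2 < b1 then b1 else 0) + (if b1 < s * v2 then s * v2 else 0))) *
      (1 + Real.exp ((s * v2 - b1) / lam))⁻¹ with hg_def
  set c : ℝ := b1 / s with hc_def
  have hc0 : 0 ≤ c := div_nonneg hb0 hs0.le
  have hc1 : c ≤ 1 := (div_le_one hs0).mpr hbs
  have hsc : s * c = b1 := by rw [hc_def]; field_simp
  set A : ℝ → ℝ := fun v =>
    Real.exp ((s * v - b1) / lam) / (1 + Real.exp ((s * v - b1) / lam)) with hA_def
  set B : ℝ → ℝ := fun v => (1 + Real.exp ((s * v - b1) / lam))⁻¹ with hB_def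
  set H : ℝ → ℝ := fun v => if v ≤ c then A v else B v with hH_def
  have hden : ∀ v : ℝ, 0 < 1 + Real.exp ((s * v - b1) / lam) := fun v => by positivity
  have hA0 : ∀ v : ℝ, 0 ≤ A v := fun v => by
    simp only [hA_def]; positivity
  have hB0 : ∀ v : ℝ, 0 ≤ B v := fun v => by
    simp only [hB_def]; positivity
  have hAB : ∀ v : ℝ, A v = 1 - B v := by
    intro v
    have := (hden v).ne'
    simp only [hA_def, hB_def]
    field_simp
    ring
  have contA : Continuous A := by
    simp only [hA_def]; fun_prop (disch := intro x; positivity)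
  have contB : Continuous B := by
    simp only [hB_def]; fun_prop (disch := intro x; positivity)
  have hABc : ∀ v : ℝ, v = c → A v = B v := by
    intro v hv
    subst hv
    simp only [hA_def, hB_def, hsc, sub_self, zero_div, Real.exp_zero]
    norm_num
  have contH : Continuous H := by
    simp only [hH_def]
    exact Continuous.if_le contA contB continuous_id continuous_const
      (fun x hx => hABc x hx)
  -- pointwise bound
  have hpt : ∀ v ∈ Set.Icc (0 : ℝ) 1, |f v - g v| ≤ H v := by
    intro v hv
    obtain ⟨hv0', hv1'⟩ := hv
    rcases lt_trichotomy v c with h | h | h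
    · have hlt : s * v < b1 := by
        rw [← hsc]; exact (mul_lt_mul_iff_right₀ hs0).mpr h
      have hnlt : ¬ b1 < s * v := by linarith
      have e1 : f v - g v = (v1 - b1) * A v := by
        simp only [hf_def, hg_def, if_pos hlt, if_neg hnlt, hAB v]
        ring
      have hHv : H v = A v := by simp only [hH_def, if_pos h.le]
      rw [e1, hHv, abs_mul, abs_of_nonneg (hA0 v)]
      calc |v1 - b1| * A v ≤ 1 * A v := by
            apply mul_le_mul_of_nonneg_right _ (hA0 v)
            rw [abs_le]; constructor <;> linarith
        _ = A v := one_mul _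
    · have heq : s * v = b1 := by rw [h, hsc]
      have h1 : ¬ s * v < b1 := by linarith
      have h2 : ¬ b1 < s * v := by linarith
      have hHv : H v = A v := by simp only [hH_def, if_pos h.le]
      have hAv : A v = 1 / 2 := by
        simp only [hA_def, heq, sub_self, zero_div, Real.exp_zero]; norm_num
      have hBv : B v = 1 / 2 := by
        simp only [hB_def, heq, sub_self, zero_div, Real.exp_zero]; norm_num
      simp only [hf_def, hg_def, if_neg h1, if_neg h2, hHv, hAv, hBv]
      rw [abs_le]
      constructor <;> nlinarith
    · have hgt : b1 < s * v := by
        rw [← hsc]; exact (mul_lt_mul_iff_right₀ hs0).mpr h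
      have hnlt : ¬ s * v < b1 := by linarith
      have e1 : f v - g v = -((v1 - s * v) * B v) := by
        simp only [hf_def, hg_def, if_neg hnlt, if_pos hgt]
        ring
      have hHv : H v = B v := by simp only [hH_def, if_neg (not_le.mpr h)]
      have hsv0 : 0 ≤ s * v := mul_nonneg hs0.le hv0'
      have hsv1 : s * v ≤ 1 := by nlinarith
      rw [e1, hHv, abs_neg, abs_mul, abs_of_nonneg (hB0 v)]
      calc |v1 - s * v| * B v ≤ 1 * B v := by
            apply mul_le_mul_of_nonneg_right _ (hB0 v)
            rw [abs_le]; constructor <;> linarith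
        _ = B v := one_mul _
  -- integrability
  have hmf : MeasurableSet {v : ℝ | s * v < b1} :=
    (isOpen_lt (by fun_prop) continuous_const).measurableSet
  have hmg : MeasurableSet {v : ℝ | b1 < s * v} :=
    (isOpen_lt continuous_const (by fun_prop)).measurableSet
  have hintf : IntervalIntegrable f volume 0 1 := by
    rw [intervalIntegrable_iff_integrableOn_Ioc_of_le (by norm_num : (0:ℝ) ≤ 1)]
    apply Measure.integrableOn_of_bounded (M := 1) measure_Ioc_lt_top.ne
    · exact (Measurable.ite hmf measurable_const measurable_const).aestronglyMeasurable
    · apply ae_of_all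
      intro a
      simp only [hf_def, Real.norm_eq_abs]
      split_ifs
      · rw [abs_le]; constructor <;> linarith
      · simp
  have hintg : IntervalIntegrable g volume 0 1 := by
    rw [intervalIntegrable_iff_integrableOn_Ioc_of_le (by norm_num : (0:ℝ) ≤ 1)]
    apply Measure.integrableOn_of_bounded (M := 2) measure_Ioc_lt_top.ne
    · apply Measurable.aestronglyMeasurable
      apply Measurable.mul
      · apply Measurable.sub measurable_const
        apply Measurable.add
        · exact Measurable.ite hmf measurable_const measurable_const
        · exact Measurable.ite hmg (by fun_prop) measurable_const
      · fun_prop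
    · rw [ae_restrict_iff' measurableSet_Ioc]
      apply ae_of_all
      intro a ha
      obtain ⟨ha0, ha1⟩ := ha
      have hsa0 : 0 ≤ s * a := mul_nonneg hs0.le ha0.le
      have hsa1 : s * a ≤ 1 := by nlinarith
      have hBa0 : 0 ≤ (1 + Real.exp ((s * a - b1) / lam))⁻¹ := by positivity
      have hBa1 : (1 + Real.exp ((s * a - b1) / lam))⁻¹ ≤ 1 := by
        rw [inv_le_one_iff₀]
        right; linarith [Real.exp_pos ((s * a - b1) / lam)]
      simp only [hg_def, Real.norm_eq_abs, abs_mul]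
      have h1 : |(1 + Real.exp ((s * a - b1) / lam))⁻¹| ≤ 1 := by
        rw [abs_of_nonneg hBa0]; exact hBa1
      have h2 : |v1 - ((if s * a < b1 then b1 else 0) + (if b1 < s * a then s * a else 0))| ≤ 2 := by
        rw [abs_le]
        split_ifs <;> constructor <;> linarith
      calc |v1 - _| * _ ≤ 2 * 1 := mul_le_mul h2 h1 (abs_nonneg _) (by norm_num)
        _ = 2 := by norm_num
  -- derivative computations
  have hderivA : ∀ v : ℝ,
      HasDerivAt (fun v => lam / s * Real.log (1 + Real.exp ((s * v - b1) / lam))) (A v) v := by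
    intro v
    have h1 : HasDerivAt (fun v : ℝ => (s * v - b1) / lam) (s / lam) v := by
      simpa [mul_comm] using (((hasDerivAt_id v).const_mul s).sub_const b1).div_const lam
    have h2 := (h1.exp.const_add 1).log (hden v).ne'
    have h3 := h2.const_mul (lam / s)
    refine h3.congr_deriv ?_
    simp only [hA_def]
    field_simp
  have hderivE : ∀ v : ℝ,
      HasDerivAt (fun v => -(lam / s) * Real.exp (-((s * v - b1) / lam)))
        (Real.exp (-((s * v - b1) / lam))) v := by
    intro v
    have h1 : HasDerivAt (fun v : ℝ => -((s * v - b1) / lam)) (-(s / lam)) v := by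
      simpa [mul_comm, Pi.neg_def] using ((((hasDerivAt_id v).const_mul s).sub_const b1).div_const lam).neg
    have h2 := h1.exp.const_mul (-(lam / s))
    refine h2.congr_deriv ?_
    field_simp
  -- integral of A over [0, c]
  have intA : ∫ v in (0:ℝ)..c, A v ≤ lam / s * Real.log 2 := by
    rw [intervalIntegral.integral_eq_sub_of_hasDerivAt (fun v _ => hderivA v)
      (contA.intervalIntegrable 0 c)]
    have e1 : s * c - b1 = 0 := by rw [hsc]; ring
    have e2 : (s * 0 - b1) / lam = -b1 / lam := by ring
    rw [e1, e2, zero_div, Real.exp_zero]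
    have h1 : (0:ℝ) ≤ Real.log (1 + Real.exp (-b1 / lam)) := by
      apply Real.log_nonneg
      linarith [Real.exp_pos (-b1 / lam)]
    have h2 : (0:ℝ) ≤ lam / s := by positivity
    have : (1:ℝ) + 1 = 2 := by norm_num
    rw [this]
    nlinarith
  -- integral of B over [c, 1]
  have intB : ∫ v in c..(1:ℝ), B v ≤ lam / s := by
    have hmono : ∫ v in c..(1:ℝ), B v ≤ ∫ v in c..(1:ℝ), Real.exp (-((s * v - b1) / lam)) := by
      apply intervalIntegral.integral_mono_on hc1 (contB.intervalIntegrable c 1)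
        ((by fun_prop : Continuous fun v : ℝ => Real.exp (-((s * v - b1) / lam))).intervalIntegrable c 1)
      intro v hv
      simp only [hB_def]
      rw [Real.exp_neg]
      apply inv_anti₀ (Real.exp_pos _)
      linarith [Real.exp_pos ((s * v - b1) / lam)]
    have heval : ∫ v in c..(1:ℝ), Real.exp (-((s * v - b1) / lam)) ≤ lam / s := by
      rw [intervalIntegral.integral_eq_sub_of_hasDerivAt (fun v _ => hderivE v)
        ((by fun_prop : Continuous fun v : ℝ => Real.exp (-((s * v - b1) / lam))).intervalIntegrable c 1)]
      have e1 : -((s * c - b1) / lam) = 0 := by rw [hsc]; ring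
      rw [e1, Real.exp_zero]
      have h2 : (0:ℝ) ≤ lam / s := by positivity
      have h3 : 0 < Real.exp (-((s * 1 - b1) / lam)) := Real.exp_pos _
      nlinarith
    linarith
  -- split integral of H
  have hsplit : ∫ v in (0:ℝ)..1, H v = (∫ v in (0:ℝ)..c, H v) + ∫ v in c..(1:ℝ), H v :=
    (intervalIntegral.integral_add_adjacent_intervals (contH.intervalIntegrable 0 c)
      (contH.intervalIntegrable c 1)).symm
  have hHA : ∫ v in (0:ℝ)..c, H v = ∫ v in (0:ℝ)..c, A v := by
    apply intervalIntegral.integral_congr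
    intro v hv
    rw [Set.uIcc_of_le hc0] at hv
    simp only [hH_def, if_pos hv.2]
  have hHB : ∫ v in c..(1:ℝ), H v = ∫ v in c..(1:ℝ), B v := by
    apply intervalIntegral.integral_congr
    intro v hv
    rw [Set.uIcc_of_le hc1] at hv
    simp only [hH_def]
    by_cases hvc : v ≤ c
    · rw [if_pos hvc]
      exact hABc v (le_antisymm hvc hv.1)
    · rw [if_neg hvc]
  have hintH : ∫ v in (0:ℝ)..1, H v ≤ (Real.log 2 + 1) / s * lam := by
    rw [hsplit, hHA, hHB]
    have : (Real.log 2 + 1) / s * lam = lam / s * Real.log 2 + lam / s := by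
      field_simp
    rw [this]
    linarith
  -- assemble
  have hIccf : ∫ v2 in Set.Icc (0:ℝ) 1, f v2 = ∫ v in (0:ℝ)..1, f v := by
    rw [intervalIntegral.integral_of_le (by norm_num : (0:ℝ) ≤ 1),
      MeasureTheory.integral_Icc_eq_integral_Ioc]
  have hIccg : ∫ v2 in Set.Icc (0:ℝ) 1, g v2 = ∫ v in (0:ℝ)..1, g v := by
    rw [intervalIntegral.integral_of_le (by norm_num : (0:ℝ) ≤ 1),
      MeasureTheory.integral_Icc_eq_integral_Ioc]
  rw [hIccf, hIccg, ← intervalIntegral.integral_sub hintf hintg]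
  calc |∫ v in (0:ℝ)..1, (f v - g v)|
      ≤ ∫ v in (0:ℝ)..1, |f v - g v| :=
        intervalIntegral.abs_integral_le_integral_abs (by norm_num)
    _ ≤ ∫ v in (0:ℝ)..1, H v := by
        apply intervalIntegral.integral_mono_on (by norm_num)
          (hintf.sub hintg).abs (contH.intervalIntegrable 0 1)
        exact hpt
    _ ≤ (Real.log 2 + 1) / s * lam := hintH
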